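/- arXiv:1412.2633 — 2 statements merged into one kernel-verified Lean document; each statement's English description precedes it below -/
import Mathlib

section
/- Let α > 0, m a nonnegative integer, and c > 1. Define I_m(t) = ∫_c^∞ (log λ)^{-α} λ^m e^{-λt} dλ. Then as t → 0+, I_m(t) = m! · t^{-1-m} |log t|^{-α} (1 + O(|log t|^{-1})). -/
open MeasureTheory Real Set

lemma aux_mvt {α : ℝ} (hα : 0 < α) {x y : ℝ} (hy : 0 < y) (hx : y/2 ≤ x) :
    |x ^ (-α) - y ^ (-α)| ≤ (α * (y/2) ^ (-α-1)) * |x - y| := by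
  have h2 : (0:ℝ) < y/2 := by positivity
  have key : ‖(fun z : ℝ => z ^ (-α)) x - (fun z : ℝ => z ^ (-α)) y‖ ≤
      (α * (y/2) ^ (-α-1)) * ‖x - y‖ := by
    refine Convex.norm_image_sub_le_of_norm_hasDerivWithin_le
      (f := fun z : ℝ => z ^ (-α)) (f' := fun z : ℝ => -α * z ^ (-α-1))
      (s := Ici (y/2)) ?_ ?_ (convex_Ici _) (Set.mem_Ici.mpr (by linarith)) (Set.mem_Ici.mpr hx)
    · intro z hz
      have hz0 : z ≠ 0 := ((h2.trans_le (Set.mem_Ici.mp hz))).ne'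
      exact (Real.hasDerivAt_rpow_const (x := z) (p := -α) (Or.inl hz0)).hasDerivWithinAt
    · intro z hz
      have hz0 : (0:ℝ) < z := lt_of_lt_of_le h2 (Set.mem_Ici.mp hz)
      have h3 : z ^ (-α-1) ≤ (y/2) ^ (-α-1) :=
        Real.rpow_le_rpow_of_nonpos h2 (Set.mem_Ici.mp hz) (by linarith)
      rw [norm_mul, norm_neg, Real.norm_eq_abs, Real.norm_eq_abs,
        abs_of_pos hα, abs_of_pos (Real.rpow_pos_of_pos hz0 _)]
      exact mul_le_mul_of_nonneg_left h3 hα.le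
  simpa [Real.norm_eq_abs] using key

lemma aux_abs_log {u : ℝ} (hu : 0 < u) : |Real.log u| ≤ u + 2 * u ^ (-(2:ℝ)⁻¹) := by
  have h1 : Real.log u ≤ u - 1 := Real.log_le_sub_one_of_pos hu
  have h2 : Real.log (u ^ (-(2:ℝ)⁻¹)) ≤ u ^ (-(2:ℝ)⁻¹) - 1 :=
    Real.log_le_sub_one_of_pos (Real.rpow_pos_of_pos hu _)
  rw [Real.log_rpow hu] at h2
  have h3 : (0:ℝ) < u ^ (-(2:ℝ)⁻¹) := Real.rpow_pos_of_pos hu _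
  rw [abs_le]; constructor <;> nlinarith

lemma aux_log_le {t s : ℝ} (ht : 0 < t) (hs : 0 < s) : -Real.log t ≤ s⁻¹ * t ^ (-s) := by
  have h1 : Real.log (t ^ (-s)) ≤ t ^ (-s) - 1 :=
    Real.log_le_sub_one_of_pos (Real.rpow_pos_of_pos ht _)
  rw [Real.log_rpow ht] at h1
  have h2 : (0:ℝ) < t ^ (-s) := Real.rpow_pos_of_pos ht _
  rw [← mul_le_mul_iff_right₀ hs, ← mul_assoc, mul_inv_cancel₀ hs.ne', one_mul]
  nlinarith

lemma aux_integrable (t : ℝ) (ht : 0 < t) (p : ℝ) (hp : -1 < p) :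
    IntegrableOn (fun l : ℝ => l ^ p * Real.exp (-(l * t))) (Ioi 0) := by
  have := integrableOn_rpow_mul_exp_neg_mul_rpow (p := 1) (s := p) (b := t) hp one_pos ht
  refine this.congr_fun (fun l hl => ?_) measurableSet_Ioi
  simp only [Real.rpow_one]; ring_nf

lemma aux_integral (t : ℝ) (ht : 0 < t) (a : ℝ) (ha : 0 < a) :
    ∫ l in Ioi (0:ℝ), l ^ (a - 1) * Real.exp (-(l * t)) = t ^ (-a) * Real.Gamma a := by
  have h := Real.integral_rpow_mul_exp_neg_mul_Ioi ha ht
  have heq : ∀ l ∈ Ioi (0:ℝ), l ^ (a - 1) * Real.exp (-(l * t))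
      = l ^ (a - 1) * Real.exp (-(t * l)) := by intro l _; rw [mul_comm l t]
  rw [setIntegral_congr_fun measurableSet_Ioi heq, h, one_div,
    ← Real.rpow_neg_one, ← Real.rpow_mul ht.le]
  norm_num

set_option maxHeartbeats 1000000 in
theorem laplace_log_asymp_zero (α : ℝ) (hα : 0 < α) (m : ℕ) (c : ℝ) (hc : 1 < c) :
    ∃ C δ : ℝ, 0 < δ ∧ ∀ t : ℝ, 0 < t → t ≤ δ →
      |(∫ l in Set.Ioi c, (Real.log l) ^ (-α) * l ^ m * Real.exp (-(l * t))) -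
          (m.factorial : ℝ) * t ^ (-1 - (m : ℝ)) * |Real.log t| ^ (-α)| ≤
        C * t ^ (-1 - (m : ℝ)) * |Real.log t| ^ (-α - 1) := by
  have hc0 : (0:ℝ) < c := lt_trans one_pos hc
  have hlc : 0 < Real.log c := Real.log_pos hc
  have hm0 : (0:ℝ) ≤ (m:ℝ) := Nat.cast_nonneg m
  set CA := 2 * Real.log c ^ (-α) * (2*(α+1)) ^ (α+1) with hCA
  set CB := α * 2 ^ (α+1) * (Real.Gamma ((m:ℝ)+2) + 2 * Real.Gamma ((m:ℝ)+2⁻¹)) with hCB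
  set CC := 2 * c ^ (m+1) with hCC
  refine ⟨CA + CB + CC, (c^2)⁻¹, by positivity, fun t ht htδ => ?_⟩
  have hc21 : (1:ℝ) < c^2 := by nlinarith
  have ht1 : t < 1 := lt_of_le_of_lt htδ (by rw [inv_lt_one_iff₀]; right; exact hc21)
  have hlt : Real.log t < 0 := Real.log_neg ht ht1
  have hL : 0 < -Real.log t := neg_pos.mpr hlt
  set L := -Real.log t with hLdef
  have habs : |Real.log t| = L := abs_of_neg hlt
  have hLc : 2 * Real.log c ≤ L := by
    have h1 : Real.log t ≤ Real.log ((c^2)⁻¹) := Real.log_le_log ht htδ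
    rw [Real.log_inv, Real.log_pow] at h1
    push_cast at h1
    rw [hLdef]; linarith
  have hLc1 : Real.log c ≤ L := by linarith
  set s := t ^ (-(2⁻¹:ℝ)) with hsdef
  have hs0 : 0 < s := Real.rpow_pos_of_pos ht _
  have hcs : c ≤ s := by
    have h1 : c^2 ≤ t⁻¹ := by
      rw [← one_div, le_div_iff₀ ht]
      calc c^2 * t ≤ c^2 * (c^2)⁻¹ := mul_le_mul_of_nonneg_left htδ (by positivity)
        _ = 1 := mul_inv_cancel₀ (by positivity)
    calc c = ((c^2:ℝ)) ^ (2⁻¹:ℝ) := by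
          rw [← Real.rpow_natCast c 2, ← Real.rpow_mul hc0.le]; norm_num
      _ ≤ (t⁻¹) ^ (2⁻¹:ℝ) := Real.rpow_le_rpow (by positivity) h1 (by norm_num)
      _ = s := by rw [← Real.rpow_neg_one t, ← Real.rpow_mul ht.le, hsdef]; norm_num
  have hlogs : Real.log s = 2⁻¹ * L := by
    rw [hsdef, Real.log_rpow ht, hLdef]; ring
  -- integrability
  have hInt0 : IntegrableOn (fun l : ℝ => l ^ m * Real.exp (-(l*t))) (Ioi 0) := by
    have := aux_integrable t ht ((m:ℕ):ℝ) (by linarith)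
    exact this.congr_fun (fun l hl => by simp only [Real.rpow_natCast]) measurableSet_Ioi
  have hIntc : IntegrableOn (fun l : ℝ => l ^ m * Real.exp (-(l*t))) (Ioi c) :=
    hInt0.mono_set (Ioi_subset_Ioi hc0.le)
  have hmeasg : Measurable fun l : ℝ => Real.log l ^ (-α) * l ^ m * Real.exp (-(l*t)) :=
    ((Real.measurable_log.pow_const _).mul (measurable_id.pow_const m)).mul
      ((measurable_id.mul_const t).neg.exp)
  have hIntg : IntegrableOn
      (fun l : ℝ => Real.log l ^ (-α) * l ^ m * Real.exp (-(l*t))) (Ioi c) := by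
    refine Integrable.mono' (hIntc.const_mul (Real.log c ^ (-α)))
      hmeasg.aestronglyMeasurable ?_
    filter_upwards [self_mem_ae_restrict measurableSet_Ioi] with l hl
    have hcl : c < l := hl
    have hl0 : 0 < l := hc0.trans hcl
    have hlogl : Real.log c ≤ Real.log l := Real.log_le_log hc0 hcl.le
    have h1 : Real.log l ^ (-α) ≤ Real.log c ^ (-α) :=
      Real.rpow_le_rpow_of_nonpos hlc hlogl (by linarith)
    have hgl : (0:ℝ) ≤ Real.log l ^ (-α) := Real.rpow_nonneg (hlc.le.trans hlogl) _
    rw [Real.norm_eq_abs, abs_of_nonneg (by positivity)]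
    calc Real.log l ^ (-α) * l ^ m * Real.exp (-(l*t))
        ≤ Real.log c ^ (-α) * l ^ m * Real.exp (-(l*t)) := by gcongr
      _ = Real.log c ^ (-α) * (l ^ m * Real.exp (-(l*t))) := by ring
  -- Gamma integral values
  have hGm : ∫ l in Ioi (0:ℝ), l ^ m * Real.exp (-(l*t))
      = t ^ (-1-(m:ℝ)) * (m.factorial : ℝ) := by
    have h := aux_integral t ht ((m:ℝ)+1) (by positivity)
    rw [show ((m:ℝ)+1)-1 = ((m:ℕ):ℝ) by ring] at h
    rw [setIntegral_congr_fun measurableSet_Ioi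
      (fun l (_ : l ∈ Ioi (0:ℝ)) => by rw [← Real.rpow_natCast l m] :
        ∀ l ∈ Ioi (0:ℝ), l ^ m * Real.exp (-(l*t)) = l ^ ((m:ℕ):ℝ) * Real.exp (-(l*t))), h,
      show -((m:ℝ)+1) = -1-(m:ℝ) by ring, Real.Gamma_nat_eq_factorial]
  have hI1 : ∫ l in Ioi (0:ℝ), l ^ ((m:ℝ)+1) * Real.exp (-(l*t))
      = t ^ (-((m:ℝ)+2)) * Real.Gamma ((m:ℝ)+2) := by
    have h := aux_integral t ht ((m:ℝ)+2) (by positivity)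
    rwa [show ((m:ℝ)+2)-1 = (m:ℝ)+1 by ring] at h
  have hI2 : ∫ l in Ioi (0:ℝ), l ^ ((m:ℝ)-2⁻¹) * Real.exp (-(l*t))
      = t ^ (-((m:ℝ)+2⁻¹)) * Real.Gamma ((m:ℝ)+2⁻¹) := by
    have h := aux_integral t ht ((m:ℝ)+2⁻¹) (by positivity)
    rwa [show ((m:ℝ)+2⁻¹)-1 = (m:ℝ)-2⁻¹ by ring] at h
  -- splitting the gamma integral at c
  have hsplit0 : ∫ l in Ioi (0:ℝ), l^m * Real.exp (-(l*t)) =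
      (∫ l in Ioc (0:ℝ) c, l^m * Real.exp (-(l*t)))
        + ∫ l in Ioi c, l^m * Real.exp (-(l*t)) := by
    rw [← setIntegral_union (Ioc_disjoint_Ioi le_rfl) measurableSet_Ioi
      (hInt0.mono_set Ioc_subset_Ioi_self) hIntc, Ioc_union_Ioi_eq_Ioi hc0.le]
  -- key algebraic identity
  have hkey : (∫ l in Ioi c, Real.log l ^ (-α) * l ^ m * Real.exp (-(l * t))) -
      (m.factorial : ℝ) * t ^ (-1 - (m:ℝ)) * L ^ (-α)
      = (∫ l in Ioi c, (Real.log l ^ (-α) * l ^ m * Real.exp (-(l * t)) -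
          L ^ (-α) * (l ^ m * Real.exp (-(l * t))))) -
        L ^ (-α) * ∫ l in Ioc (0:ℝ) c, l ^ m * Real.exp (-(l * t)) := by
    rw [integral_sub hIntg (hIntc.const_mul _), integral_const_mul]
    have e1 : (m.factorial : ℝ) * t ^ (-1-(m:ℝ)) =
        (∫ l in Ioc (0:ℝ) c, l^m * Real.exp (-(l*t)))
          + ∫ l in Ioi c, l^m * Real.exp (-(l*t)) := by
      rw [← hsplit0, hGm]; ring
    rw [show -1-(m:ℝ) = -1 - (m:ℝ) from rfl] at e1
    rw [e1]; ring
  have hIntφ : IntegrableOn (fun l : ℝ => Real.log l ^ (-α) * l ^ m * Real.exp (-(l * t)) -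
      L ^ (-α) * (l ^ m * Real.exp (-(l * t)))) (Ioi c) := hIntg.sub (hIntc.const_mul _)
  have hIntφabs : IntegrableOn (fun l : ℝ => |Real.log l ^ (-α) * l ^ m * Real.exp (-(l * t)) -
      L ^ (-α) * (l ^ m * Real.exp (-(l * t)))|) (Ioi c) := hIntφ.abs
  -- triangle inequality
  have hInn : 0 ≤ ∫ l in Ioc (0:ℝ) c, l ^ m * Real.exp (-(l * t)) :=
    setIntegral_nonneg measurableSet_Ioc (fun l hl => mul_nonneg (pow_nonneg hl.1.le m) (Real.exp_pos _).le)
  have htri : |(∫ l in Ioi c, Real.log l ^ (-α) * l ^ m * Real.exp (-(l * t))) -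
      (m.factorial : ℝ) * t ^ (-1 - (m:ℝ)) * L ^ (-α)| ≤
      (∫ l in Ioi c, |Real.log l ^ (-α) * l ^ m * Real.exp (-(l * t)) -
          L ^ (-α) * (l ^ m * Real.exp (-(l * t)))|) +
        L ^ (-α) * ∫ l in Ioc (0:ℝ) c, l ^ m * Real.exp (-(l * t)) := by
    rw [hkey]
    refine (abs_sub _ _).trans (add_le_add ?_ ?_)
    · have := norm_integral_le_integral_norm (μ := volume.restrict (Ioi c))
        (f := fun l : ℝ => Real.log l ^ (-α) * l ^ m * Real.exp (-(l * t)) -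
          L ^ (-α) * (l ^ m * Real.exp (-(l * t))))
      simpa [Real.norm_eq_abs] using this
    · rw [abs_of_nonneg (mul_nonneg (Real.rpow_nonneg hL.le _) hInn)]
  -- split the error integral at s
  have hsplit2 : ∫ l in Ioi c, |Real.log l ^ (-α) * l ^ m * Real.exp (-(l * t)) -
      L ^ (-α) * (l ^ m * Real.exp (-(l * t)))| =
      (∫ l in Ioc c s, |Real.log l ^ (-α) * l ^ m * Real.exp (-(l * t)) -
          L ^ (-α) * (l ^ m * Real.exp (-(l * t)))|) +
        ∫ l in Ioi s, |Real.log l ^ (-α) * l ^ m * Real.exp (-(l * t)) -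
          L ^ (-α) * (l ^ m * Real.exp (-(l * t)))| := by
    rw [← setIntegral_union (Ioc_disjoint_Ioi le_rfl) measurableSet_Ioi
      (hIntφabs.mono_set Ioc_subset_Ioi_self) (hIntφabs.mono_set (Ioi_subset_Ioi hcs)),
      Ioc_union_Ioi_eq_Ioi hcs]
  -- Term A : pointwise bound on Ioc c s
  have hA1 : ∀ l ∈ Ioc c s, |Real.log l ^ (-α) * l ^ m * Real.exp (-(l * t)) -
      L ^ (-α) * (l ^ m * Real.exp (-(l * t)))| ≤ 2 * Real.log c ^ (-α) * s ^ m := by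
    intro l hl
    have hcl : c < l := hl.1
    have hl0 : 0 < l := hc0.trans hcl
    have hlogl : Real.log c ≤ Real.log l := Real.log_le_log hc0 hcl.le
    have hg1 : Real.log l ^ (-α) ≤ Real.log c ^ (-α) :=
      Real.rpow_le_rpow_of_nonpos hlc hlogl (by linarith)
    have hg2 : L ^ (-α) ≤ Real.log c ^ (-α) :=
      Real.rpow_le_rpow_of_nonpos hlc hLc1 (by linarith)
    have hh1 : l ^ m * Real.exp (-(l*t)) ≤ s ^ m := by
      calc l ^ m * Real.exp (-(l*t)) ≤ s ^ m * 1 := by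
            refine mul_le_mul (pow_le_pow_left₀ hl0.le hl.2 m) ?_ (Real.exp_pos _).le
              (pow_nonneg hs0.le m)
            exact Real.exp_le_one_iff.mpr (by nlinarith)
        _ = s ^ m := mul_one _
    have hh0 : (0:ℝ) ≤ l ^ m * Real.exp (-(l*t)) := by positivity
    have hglnn : (0:ℝ) ≤ Real.log l ^ (-α) := Real.rpow_nonneg (hlc.le.trans hlogl) _
    have hgcnn : (0:ℝ) ≤ Real.log c ^ (-α) := Real.rpow_nonneg hlc.le _
    calc |Real.log l ^ (-α) * l ^ m * Real.exp (-(l * t)) -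
          L ^ (-α) * (l ^ m * Real.exp (-(l * t)))|
        ≤ |Real.log l ^ (-α) * l ^ m * Real.exp (-(l * t))| +
            |L ^ (-α) * (l ^ m * Real.exp (-(l * t)))| := abs_sub _ _
      _ = Real.log l ^ (-α) * (l ^ m * Real.exp (-(l * t))) +
            L ^ (-α) * (l ^ m * Real.exp (-(l * t))) := by
          rw [abs_of_nonneg (by positivity), abs_of_nonneg
            (mul_nonneg (Real.rpow_nonneg hL.le _) hh0)]
          ring
      _ ≤ Real.log c ^ (-α) * s ^ m + Real.log c ^ (-α) * s ^ m :=
          add_le_add (mul_le_mul hg1 hh1 hh0 hgcnn) (mul_le_mul hg2 hh1 hh0 hgcnn)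
      _ = 2 * Real.log c ^ (-α) * s ^ m := by ring
  have hA2 : ∫ l in Ioc c s, |Real.log l ^ (-α) * l ^ m * Real.exp (-(l * t)) -
      L ^ (-α) * (l ^ m * Real.exp (-(l * t)))| ≤ 2 * Real.log c ^ (-α) * s ^ m * s := by
    have hMnn : (0:ℝ) ≤ 2 * Real.log c ^ (-α) * s ^ m :=
      mul_nonneg (mul_nonneg (by norm_num) (Real.rpow_nonneg hlc.le _)) (pow_nonneg hs0.le m)
    calc ∫ l in Ioc c s, |Real.log l ^ (-α) * l ^ m * Real.exp (-(l * t)) -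
          L ^ (-α) * (l ^ m * Real.exp (-(l * t)))|
        ≤ ∫ _ in Ioc c s, (2 * Real.log c ^ (-α) * s ^ m) :=
          setIntegral_mono_on (hIntφabs.mono_set Ioc_subset_Ioi_self)
            (integrableOn_const measure_Ioc_lt_top.ne) measurableSet_Ioc hA1
      _ = (s - c) * (2 * Real.log c ^ (-α) * s ^ m) := by
          rw [setIntegral_const, smul_eq_mul, Real.volume_real_Ioc,
            max_eq_left (show (0:ℝ) ≤ s - c by linarith)]
      _ ≤ s * (2 * Real.log c ^ (-α) * s ^ m) :=
          mul_le_mul_of_nonneg_right (by linarith) hMnn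
      _ = 2 * Real.log c ^ (-α) * s ^ m * s := by ring
  -- Term A: comparison of powers
  have hf1 : s ^ m * s = t ^ (-(2⁻¹:ℝ)*((m:ℝ)+1)) := by
    rw [hsdef, ← Real.rpow_natCast (t ^ (-(2⁻¹:ℝ))) m, ← Real.rpow_mul ht.le,
      ← Real.rpow_add ht]
    congr 1; push_cast; ring
  have hf2 : L ^ (α+1) ≤ (2*(α+1))^(α+1) * t ^ (-(2⁻¹:ℝ)) := by
    have h1 : L ≤ (2*(α+1)) * t ^ (-((2*(α+1))⁻¹)) := by
      have h2 := aux_log_le ht (s := (2*(α+1))⁻¹) (by positivity)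
      rw [inv_inv] at h2
      rw [hLdef]; exact h2
    have hne : α + 1 ≠ 0 := by linarith
    calc L ^ (α+1) ≤ ((2*(α+1)) * t ^ (-((2*(α+1))⁻¹))) ^ (α+1) :=
          Real.rpow_le_rpow hL.le h1 (by linarith)
      _ = (2*(α+1))^(α+1) * (t ^ (-((2*(α+1))⁻¹)))^(α+1) :=
          Real.mul_rpow (by positivity) (Real.rpow_nonneg ht.le _)
      _ = (2*(α+1))^(α+1) * t ^ (-(2⁻¹:ℝ)) := by
          have hexp : -((2*(α+1))⁻¹) * (α+1) = -(2⁻¹:ℝ) := by field_simp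
          rw [← Real.rpow_mul ht.le, hexp]
  have hLL : L ^ (α+1) * L ^ (-α-1) = 1 := by
    rw [← Real.rpow_add hL]; norm_num
  have htermA : 2 * Real.log c ^ (-α) * s ^ m * s ≤ CA * t ^ (-1-(m:ℝ)) * L ^ (-α-1) := by
    have hE : t ^ (-(2⁻¹:ℝ)*((m:ℝ)+1)) * L ^ (α+1)
        ≤ (2*(α+1))^(α+1) * t ^ (-1-(m:ℝ)) := by
      calc t ^ (-(2⁻¹:ℝ)*((m:ℝ)+1)) * L ^ (α+1)
          ≤ t ^ (-(2⁻¹:ℝ)*((m:ℝ)+1)) * ((2*(α+1))^(α+1) * t ^ (-(2⁻¹:ℝ))) :=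
            mul_le_mul_of_nonneg_left hf2 (Real.rpow_nonneg ht.le _)
        _ = (2*(α+1))^(α+1) * t ^ (-(2⁻¹:ℝ)*((m:ℝ)+1) + -(2⁻¹:ℝ)) := by
            rw [Real.rpow_add ht]; ring
        _ ≤ (2*(α+1))^(α+1) * t ^ (-1-(m:ℝ)) := by
            refine mul_le_mul_of_nonneg_left ?_ (by positivity)
            exact Real.rpow_le_rpow_of_exponent_ge ht ht1.le (by linarith)
    have heq : 2 * Real.log c ^ (-α) * s ^ m * s
        = 2 * Real.log c ^ (-α) * t ^ (-(2⁻¹:ℝ)*((m:ℝ)+1)) := by rw [mul_assoc, hf1]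
    rw [heq, hCA]
    have h2 : t ^ (-(2⁻¹:ℝ)*((m:ℝ)+1))
        ≤ (2*(α+1))^(α+1) * t ^ (-1-(m:ℝ)) * L ^ (-α-1) := by
      have h3 := mul_le_mul_of_nonneg_right hE (Real.rpow_nonneg hL.le (-α-1))
      rwa [mul_assoc, hLL, mul_one] at h3
    have hnn : (0:ℝ) ≤ 2 * Real.log c ^ (-α) :=
      mul_nonneg (by norm_num) (Real.rpow_nonneg hlc.le _)
    calc 2 * Real.log c ^ (-α) * t ^ (-(2⁻¹:ℝ)*((m:ℝ)+1))
        ≤ 2 * Real.log c ^ (-α) * ((2*(α+1))^(α+1) * t ^ (-1-(m:ℝ)) * L ^ (-α-1)) :=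
          mul_le_mul_of_nonneg_left h2 hnn
      _ = 2 * Real.log c ^ (-α) * (2*(α+1))^(α+1) * t ^ (-1-(m:ℝ)) * L ^ (-α-1) := by ring
  -- Term B : pointwise bound on Ioi s
  have hCψnn : (0:ℝ) ≤ α * 2^(α+1) * L^(-α-1) :=
    mul_nonneg (mul_nonneg hα.le (Real.rpow_nonneg (by norm_num) _))
      (Real.rpow_nonneg hL.le _)
  have hB1 : ∀ l ∈ Ioi s, |Real.log l ^ (-α) * l ^ m * Real.exp (-(l * t)) -
      L ^ (-α) * (l ^ m * Real.exp (-(l * t)))| ≤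
      α * 2^(α+1) * L^(-α-1) * (t * (l ^ ((m:ℝ)+1) * Real.exp (-(l*t)))
        + 2 * t ^ (-(2⁻¹:ℝ)) * (l ^ ((m:ℝ)-2⁻¹) * Real.exp (-(l*t)))) := by
    intro l hl
    have hsl : s < l := hl
    have hl0 : 0 < l := hs0.trans hsl
    have hlogl : 2⁻¹ * L ≤ Real.log l := by
      rw [← hlogs]; exact Real.log_le_log hs0 hsl.le
    have hlt0 : 0 < l * t := mul_pos hl0 ht
    have hmvt := aux_mvt hα hL (by linarith : L/2 ≤ Real.log l)
    have hlogdiff : |Real.log l - L| = |Real.log (l * t)| := by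
      rw [Real.log_mul hl0.ne' ht.ne', hLdef]; ring_nf
    have habs2 : |Real.log (l*t)| ≤ l*t + 2*(l*t) ^ (-(2⁻¹:ℝ)) := aux_abs_log hlt0
    have hhalf : (L/2) ^ (-α-1) = 2^(α+1) * L^(-α-1) := by
      rw [show (-α-1:ℝ) = -(α+1) by ring,
        Real.div_rpow hL.le (by norm_num : (0:ℝ) ≤ 2),
        Real.rpow_neg (by norm_num : (0:ℝ) ≤ 2) (α+1), div_eq_mul_inv, inv_inv]
      ring
    have hh0 : (0:ℝ) ≤ l ^ m * Real.exp (-(l*t)) := by positivity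
    have e1 : l ^ ((m:ℝ)+1) = l ^ m * l := by
      rw [Real.rpow_add hl0, Real.rpow_one, Real.rpow_natCast]
    have e2 : l ^ ((m:ℝ)-2⁻¹) = l ^ m * l ^ (-(2⁻¹:ℝ)) := by
      rw [show (m:ℝ)-2⁻¹ = (m:ℝ) + -(2⁻¹:ℝ) by ring, Real.rpow_add hl0, Real.rpow_natCast]
    calc |Real.log l ^ (-α) * l ^ m * Real.exp (-(l * t)) -
          L ^ (-α) * (l ^ m * Real.exp (-(l * t)))|
        = |Real.log l ^ (-α) - L ^ (-α)| * (l ^ m * Real.exp (-(l*t))) := by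
          rw [show Real.log l ^ (-α) * l ^ m * Real.exp (-(l * t)) -
              L ^ (-α) * (l ^ m * Real.exp (-(l * t)))
              = (Real.log l ^ (-α) - L ^ (-α)) * (l ^ m * Real.exp (-(l*t))) by ring,
            abs_mul, abs_of_nonneg hh0]
      _ ≤ (α * (L/2) ^ (-α-1) * |Real.log l - L|) * (l ^ m * Real.exp (-(l*t))) :=
          mul_le_mul_of_nonneg_right hmvt hh0
      _ = α * 2^(α+1) * L^(-α-1) * (|Real.log (l*t)| * (l ^ m * Real.exp (-(l*t)))) := by
          rw [hlogdiff, hhalf]; ring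
      _ ≤ α * 2^(α+1) * L^(-α-1) *
            ((l*t + 2*(l*t) ^ (-(2⁻¹:ℝ))) * (l ^ m * Real.exp (-(l*t)))) :=
          mul_le_mul_of_nonneg_left (mul_le_mul_of_nonneg_right habs2 hh0) hCψnn
      _ = α * 2^(α+1) * L^(-α-1) * (t * (l ^ ((m:ℝ)+1) * Real.exp (-(l*t)))
            + 2 * t ^ (-(2⁻¹:ℝ)) * (l ^ ((m:ℝ)-2⁻¹) * Real.exp (-(l*t)))) := by
          rw [e1, e2, Real.mul_rpow hl0.le ht.le]; ring
  -- integrability of the majorant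
  have hIntψ1 : IntegrableOn (fun l : ℝ => l ^ ((m:ℝ)+1) * Real.exp (-(l*t))) (Ioi 0) :=
    aux_integrable t ht ((m:ℝ)+1) (by linarith)
  have hIntψ2 : IntegrableOn (fun l : ℝ => l ^ ((m:ℝ)-2⁻¹) * Real.exp (-(l*t))) (Ioi 0) :=
    aux_integrable t ht ((m:ℝ)-2⁻¹) (by linarith)
  have hIntψ : IntegrableOn (fun l : ℝ => α * 2^(α+1) * L^(-α-1) *
      (t * (l ^ ((m:ℝ)+1) * Real.exp (-(l*t)))
        + 2 * t ^ (-(2⁻¹:ℝ)) * (l ^ ((m:ℝ)-2⁻¹) * Real.exp (-(l*t))))) (Ioi 0) :=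
    ((hIntψ1.const_mul t).add (hIntψ2.const_mul (2 * t ^ (-(2⁻¹:ℝ))))).const_mul _
  have hB2 : ∫ l in Ioi s, |Real.log l ^ (-α) * l ^ m * Real.exp (-(l * t)) -
      L ^ (-α) * (l ^ m * Real.exp (-(l * t)))| ≤
      ∫ l in Ioi s, α * 2^(α+1) * L^(-α-1) * (t * (l ^ ((m:ℝ)+1) * Real.exp (-(l*t)))
        + 2 * t ^ (-(2⁻¹:ℝ)) * (l ^ ((m:ℝ)-2⁻¹) * Real.exp (-(l*t)))) :=
    setIntegral_mono_on (hIntφabs.mono_set (Ioi_subset_Ioi hcs))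
      (hIntψ.mono_set (Ioi_subset_Ioi hs0.le)) measurableSet_Ioi hB1
  have hψnn : ∀ l ∈ Ioi (0:ℝ), 0 ≤ α * 2^(α+1) * L^(-α-1) *
      (t * (l ^ ((m:ℝ)+1) * Real.exp (-(l*t)))
        + 2 * t ^ (-(2⁻¹:ℝ)) * (l ^ ((m:ℝ)-2⁻¹) * Real.exp (-(l*t)))) := by
    intro l hl
    have hl0 : (0:ℝ) < l := hl
    refine mul_nonneg hCψnn (add_nonneg (mul_nonneg ht.le ?_) (mul_nonneg ?_ ?_))
    · exact mul_nonneg (Real.rpow_nonneg hl0.le _) (Real.exp_pos _).le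
    · exact mul_nonneg (by norm_num) (Real.rpow_nonneg ht.le _)
    · exact mul_nonneg (Real.rpow_nonneg hl0.le _) (Real.exp_pos _).le
  have hB3 : ∫ l in Ioi s, α * 2^(α+1) * L^(-α-1) *
      (t * (l ^ ((m:ℝ)+1) * Real.exp (-(l*t)))
        + 2 * t ^ (-(2⁻¹:ℝ)) * (l ^ ((m:ℝ)-2⁻¹) * Real.exp (-(l*t)))) ≤
      ∫ l in Ioi (0:ℝ), α * 2^(α+1) * L^(-α-1) *
      (t * (l ^ ((m:ℝ)+1) * Real.exp (-(l*t)))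
        + 2 * t ^ (-(2⁻¹:ℝ)) * (l ^ ((m:ℝ)-2⁻¹) * Real.exp (-(l*t)))) := by
    refine setIntegral_mono_set hIntψ ?_ ((Ioi_subset_Ioi hs0.le).eventuallyLE)
    filter_upwards [self_mem_ae_restrict measurableSet_Ioi] with l hl
    exact hψnn l hl
  have hψval : ∫ l in Ioi (0:ℝ), α * 2^(α+1) * L^(-α-1) *
      (t * (l ^ ((m:ℝ)+1) * Real.exp (-(l*t)))
        + 2 * t ^ (-(2⁻¹:ℝ)) * (l ^ ((m:ℝ)-2⁻¹) * Real.exp (-(l*t))))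
      = CB * t ^ (-1-(m:ℝ)) * L ^ (-α-1) := by
    rw [integral_const_mul, integral_add (hIntψ1.const_mul t)
      (hIntψ2.const_mul (2 * t ^ (-(2⁻¹:ℝ)))), integral_const_mul, integral_const_mul,
      hI1, hI2, hCB]
    have he1 : t * t ^ (-((m:ℝ)+2)) = t ^ (-1-(m:ℝ)) := by
      nth_rewrite 1 [← Real.rpow_one t]
      rw [← Real.rpow_add ht]; congr 1; ring
    have he2 : t ^ (-(2⁻¹:ℝ)) * t ^ (-((m:ℝ)+2⁻¹)) = t ^ (-1-(m:ℝ)) := by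
      rw [← Real.rpow_add ht]; congr 1; ring
    linear_combination (α * 2^(α+1) * L^(-α-1)) * Real.Gamma ((m:ℝ)+2) * he1
      + (α * 2^(α+1) * L^(-α-1)) * 2 * Real.Gamma ((m:ℝ)+2⁻¹) * he2
  -- Term C
  have hC1 : ∫ l in Ioc (0:ℝ) c, l ^ m * Real.exp (-(l*t)) ≤ c ^ (m+1) := by
    calc ∫ l in Ioc (0:ℝ) c, l ^ m * Real.exp (-(l*t))
        ≤ ∫ _ in Ioc (0:ℝ) c, c ^ m := by
          refine setIntegral_mono_on (hInt0.mono_set Ioc_subset_Ioi_self)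
            (integrableOn_const measure_Ioc_lt_top.ne) measurableSet_Ioc ?_
          intro l hl
          calc l ^ m * Real.exp (-(l*t)) ≤ c ^ m * 1 :=
                mul_le_mul (pow_le_pow_left₀ hl.1.le hl.2 m)
                  (Real.exp_le_one_iff.mpr (by nlinarith [hl.1])) (Real.exp_pos _).le
                  (pow_nonneg hc0.le m)
            _ = c ^ m := mul_one _
      _ = c * c ^ m := by
          rw [setIntegral_const, smul_eq_mul, Real.volume_real_Ioc,
            max_eq_left (show (0:ℝ) ≤ c - 0 by linarith)]
          ring
      _ = c ^ (m+1) := by rw [pow_succ]; ring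
  have htermC : L ^ (-α) * (∫ l in Ioc (0:ℝ) c, l ^ m * Real.exp (-(l*t)))
      ≤ CC * t ^ (-1-(m:ℝ)) * L ^ (-α-1) := by
    have hLsplit : L ^ (-α) = L * L ^ (-α-1) := by
      conv_lhs => rw [show (-α:ℝ) = 1 + (-α-1) by ring]
      rw [Real.rpow_add hL, Real.rpow_one]
    have hLt : L ≤ 2 * t ^ (-1-(m:ℝ)) := by
      have h1 : L ≤ 2 * t ^ (-(2⁻¹:ℝ)) := by
        have h2 := aux_log_le ht (s := (2:ℝ)⁻¹) (by norm_num)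
        rw [inv_inv] at h2
        rw [hLdef]; exact h2
      refine h1.trans (mul_le_mul_of_nonneg_left ?_ (by norm_num))
      exact Real.rpow_le_rpow_of_exponent_ge ht ht1.le (by linarith)
    calc L ^ (-α) * (∫ l in Ioc (0:ℝ) c, l ^ m * Real.exp (-(l*t)))
        = (L * (∫ l in Ioc (0:ℝ) c, l ^ m * Real.exp (-(l*t)))) * L ^ (-α-1) := by
          rw [hLsplit]; ring
      _ ≤ ((2 * t ^ (-1-(m:ℝ))) * c ^ (m+1)) * L ^ (-α-1) := by
          refine mul_le_mul_of_nonneg_right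
            (mul_le_mul hLt hC1 hInn (by positivity)) (Real.rpow_nonneg hL.le _)
      _ = CC * t ^ (-1-(m:ℝ)) * L ^ (-α-1) := by rw [hCC]; ring
  -- assembly
  rw [habs]
  calc |(∫ l in Ioi c, Real.log l ^ (-α) * l ^ m * Real.exp (-(l * t))) -
      (m.factorial : ℝ) * t ^ (-1 - (m:ℝ)) * L ^ (-α)|
      ≤ ((∫ l in Ioc c s, |Real.log l ^ (-α) * l ^ m * Real.exp (-(l * t)) -
          L ^ (-α) * (l ^ m * Real.exp (-(l * t)))|) +
        ∫ l in Ioi s, |Real.log l ^ (-α) * l ^ m * Real.exp (-(l * t)) -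
          L ^ (-α) * (l ^ m * Real.exp (-(l * t)))|) +
        L ^ (-α) * ∫ l in Ioc (0:ℝ) c, l ^ m * Real.exp (-(l * t)) := by
        rw [← hsplit2]; exact htri
    _ ≤ (CA * t ^ (-1-(m:ℝ)) * L ^ (-α-1) + CB * t ^ (-1-(m:ℝ)) * L ^ (-α-1))
          + CC * t ^ (-1-(m:ℝ)) * L ^ (-α-1) := by
        refine add_le_add (add_le_add (hA2.trans htermA) ?_) htermC
        exact (hB2.trans hB3).trans (le_of_eq hψval)
    _ = (CA + CB + CC) * t ^ (-1-(m:ℝ)) * L ^ (-α-1) := by ring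
end

section
/- Let A and B be compact self-adjoint operators on a Hilbert space, and α > 0. Suppose λ_n^±(A) = C^± n^{-α} + o(n^{-α}) as n → ∞ for both signs, and s_n(B) = o(n^{-α}) as n → ∞. Then λ_n^±(A+B) = C^± n^{-α} + o(n^{-α}) as n → ∞. -/
set_option linter.unusedSectionVars false
set_option maxHeartbeats 1000000


variable {H : Type*} [NormedAddCommGroup H] [InnerProductSpace ℂ H] [CompleteSpace H]

/-- Courant–Fischer min–max value: the `n`-th (0-based) positive eigenvalue of a compact
self-adjoint operator, padded with zeros. -/
noncomputable def lambdaPos (A : H →L[ℂ] H) (n : ℕ) : ℝ :=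
  ⨅ V : {V : Submodule ℂ H // Module.finrank ℂ V = n},
    ⨆ x : {x : H // x ∈ (V : Submodule ℂ H)ᗮ ∧ ‖x‖ = 1},
      (inner ℂ (A (x : H)) (x : H) : ℂ).re

/-- The `n`-th (0-based) singular value of a bounded operator. -/
noncomputable def sVal (B : H →L[ℂ] H) (n : ℕ) : ℝ :=
  Real.sqrt (lambdaPos ((ContinuousLinearMap.adjoint B).comp B) n)

/-- Counting function of positive eigenvalues exceeding `ε`. -/
noncomputable def posCount (A : H →L[ℂ] H) (ε : ℝ) : ℕ :=
  Nat.card {n : ℕ | ε < lambdaPos A n}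


open Module Submodule

noncomputable def supF (T : H →L[ℂ] H) (V : Submodule ℂ H) : ℝ :=
  ⨆ x : {x : H // x ∈ Vᗮ ∧ ‖x‖ = 1}, (inner ℂ (T (x : H)) (x : H) : ℂ).re

lemma lambdaPos_eq (T : H →L[ℂ] H) (n : ℕ) :
    lambdaPos T n = ⨅ V : {V : Submodule ℂ H // finrank ℂ V = n}, supF T (V : Submodule ℂ H) := rfl

lemma quad_abs_le (T : H →L[ℂ] H) {x : H} (hx : ‖x‖ = 1) :
    |(inner ℂ (T x) x : ℂ).re| ≤ ‖T‖ := by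
  calc |(inner ℂ (T x) x : ℂ).re| ≤ ‖(inner ℂ (T x) x : ℂ)‖ := Complex.abs_re_le_norm _
    _ = ‖(inner ℂ (T x) x : ℂ)‖ := rfl
    _ ≤ ‖T x‖ * ‖x‖ := norm_inner_le_norm _ _
    _ ≤ (‖T‖ * ‖x‖) * ‖x‖ := by
        have := T.le_opNorm x
        nlinarith [norm_nonneg x]
    _ = ‖T‖ := by rw [hx]; ring

lemma supF_bddAbove (T : H →L[ℂ] H) (V : Submodule ℂ H) :
    BddAbove (Set.range fun x : {x : H // x ∈ Vᗮ ∧ ‖x‖ = 1} =>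
      (inner ℂ (T (x : H)) (x : H) : ℂ).re) := by
  refine ⟨‖T‖, ?_⟩
  rintro _ ⟨⟨x, hxV, hx1⟩, rfl⟩
  exact (abs_le.mp (quad_abs_le T hx1)).2

lemma neg_norm_le_supF (T : H →L[ℂ] H) (V : Submodule ℂ H) : -‖T‖ ≤ supF T V := by
  rcases isEmpty_or_nonempty {x : H // x ∈ Vᗮ ∧ ‖x‖ = 1} with h | h
  · rw [supF, Real.iSup_of_isEmpty]
    simp [norm_nonneg]
  · obtain ⟨⟨x, hxV, hx1⟩⟩ := h
    refine le_trans ?_ (le_ciSup (supF_bddAbove T V) ⟨x, hxV, hx1⟩)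
    exact neg_le_of_abs_le (quad_abs_le T hx1)

lemma lambdaPos_bddBelow (T : H →L[ℂ] H) (n : ℕ) :
    BddBelow (Set.range fun V : {V : Submodule ℂ H // finrank ℂ V = n} =>
      supF T (V : Submodule ℂ H)) := by
  refine ⟨-‖T‖, ?_⟩
  rintro _ ⟨V, rfl⟩
  exact neg_norm_le_supF T _

lemma lambdaPos_le_supF (T : H →L[ℂ] H) {n : ℕ} {V : Submodule ℂ H} (hV : finrank ℂ V = n) :
    lambdaPos T n ≤ supF T V :=
  ciInf_le (lambdaPos_bddBelow T n) ⟨V, hV⟩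

open Module Submodule

lemma extend_finrank (hH : ¬ FiniteDimensional ℂ H) (k : ℕ) :
    ∀ V : Submodule ℂ H, FiniteDimensional ℂ V → finrank ℂ V ≤ k →
      ∃ U : Submodule ℂ H, V ≤ U ∧ finrank ℂ U = k ∧ FiniteDimensional ℂ U := by
  induction k with
  | zero => exact fun V hfd hle => ⟨V, le_rfl, Nat.le_zero.mp hle, hfd⟩
  | succ k ih =>
    intro V hfd hle
    rcases eq_or_lt_of_le hle with heq | hlt
    · exact ⟨V, le_rfl, heq, hfd⟩
    · obtain ⟨U, hVU, hU, hUfd⟩ := ih V hfd (Nat.lt_succ_iff.mp hlt)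
      have hUne : U ≠ ⊤ := by
        rintro rfl
        exact hH (Module.Finite.equiv (Submodule.topEquiv))
      obtain ⟨x, hx⟩ : ∃ x, x ∉ U := by
        by_contra h
        push_neg at h
        exact hUne (Submodule.eq_top_iff'.mpr h)
      have hx0 : x ≠ 0 := fun h => hx (h ▸ U.zero_mem)
      have hdisj : U ⊓ (ℂ ∙ x) = ⊥ := by
        rw [eq_bot_iff]
        rintro y ⟨hyU, hyx⟩
        obtain ⟨c, rfl⟩ := Submodule.mem_span_singleton.mp hyx
        rcases eq_or_ne c 0 with rfl | hc
        · simp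
        · have : c⁻¹ • c • x ∈ U := U.smul_mem c⁻¹ hyU
          rw [smul_smul, inv_mul_cancel₀ hc, one_smul] at this
          exact absurd this hx
      refine ⟨U ⊔ (ℂ ∙ x), le_trans hVU le_sup_left, ?_, ?_⟩
      · have h1 := Submodule.finrank_sup_add_finrank_inf_eq U (ℂ ∙ x)
        rw [hdisj] at h1
        rw [finrank_bot, add_zero, hU, finrank_span_singleton hx0] at h1
        exact h1
      · infer_instance

lemma exists_finrank (hH : ¬ FiniteDimensional ℂ H) (n : ℕ) :
    ∃ V : Submodule ℂ H, finrank ℂ V = n ∧ FiniteDimensional ℂ V := by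
  obtain ⟨U, _, hU, hUfd⟩ := extend_finrank hH n ⊥ inferInstance (by simp)
  exact ⟨U, hU, hUfd⟩

lemma lambdaPos_index_nonempty (hH : ¬ FiniteDimensional ℂ H) (n : ℕ) :
    Nonempty {V : Submodule ℂ H // finrank ℂ V = n} :=
  ⟨⟨(exists_finrank hH n).choose, (exists_finrank hH n).choose_spec.1⟩⟩

lemma exists_unit_orthogonal (hH : ¬ FiniteDimensional ℂ H) (U : Submodule ℂ H)
    [FiniteDimensional ℂ U] : ∃ x : H, x ∈ Uᗮ ∧ ‖x‖ = 1 := by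
  have hUne : U ≠ ⊤ := by
    rintro rfl
    exact hH (Module.Finite.equiv (Submodule.topEquiv))
  have h : Uᗮ ≠ ⊥ := by
    rw [Ne, Submodule.orthogonal_eq_bot_iff]
    exact hUne
  obtain ⟨y, hyU, hy0⟩ := Submodule.exists_mem_ne_zero_of_ne_bot h
  refine ⟨‖y‖⁻¹ • y, Uᗮ.smul_mem _ hyU, ?_⟩
  rw [norm_smul, norm_inv, norm_norm, inv_mul_cancel₀ (norm_ne_zero_iff.mpr hy0)]

lemma lambdaPos_subadd (hH : ¬ FiniteDimensional ℂ H) (A B : H →L[ℂ] H) {n m : ℕ}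
    (hn : 1 ≤ n) (hm : 1 ≤ m) :
    lambdaPos (A + B) (n + m) ≤ lambdaPos A n + lambdaPos B m := by
  haveI h1 := lambdaPos_index_nonempty hH n
  haveI h2 := lambdaPos_index_nonempty hH m
  refine le_of_forall_pos_le_add fun ε hε => ?_
  have hA : lambdaPos A n < lambdaPos A n + ε / 2 := by linarith
  rw [lambdaPos_eq] at hA
  obtain ⟨⟨V, hV⟩, hVlt⟩ := exists_lt_of_ciInf_lt hA
  have hB : lambdaPos B m < lambdaPos B m + ε / 2 := by linarith
  rw [lambdaPos_eq] at hB
  obtain ⟨⟨W, hW⟩, hWlt⟩ := exists_lt_of_ciInf_lt hB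
  haveI : FiniteDimensional ℂ V := FiniteDimensional.of_finrank_pos (hV ▸ hn)
  haveI : FiniteDimensional ℂ W := FiniteDimensional.of_finrank_pos (hW ▸ hm)
  have hsup : finrank ℂ ↥(V ⊔ W) ≤ n + m := by
    calc finrank ℂ ↥(V ⊔ W) ≤ finrank ℂ V + finrank ℂ W :=
          Submodule.finrank_add_le_finrank_add_finrank V W
      _ = n + m := by rw [hV, hW]
  obtain ⟨U, hVWU, hU, hUfd⟩ := extend_finrank hH (n + m) (V ⊔ W) inferInstance hsup
  have key : lambdaPos (A + B) (n + m) ≤ supF (A + B) U := lambdaPos_le_supF _ hU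
  have key2 : supF (A + B) U ≤ supF A V + supF B W := by
    obtain ⟨x0, hx0U, hx01⟩ := exists_unit_orthogonal hH U
    haveI : Nonempty {x : H // x ∈ Uᗮ ∧ ‖x‖ = 1} := ⟨⟨x0, hx0U, hx01⟩⟩
    refine ciSup_le ?_
    rintro ⟨x, hxU, hx1⟩
    have hxV : x ∈ Vᗮ :=
      Submodule.orthogonal_le (le_trans le_sup_left hVWU) hxU
    have hxW : x ∈ Wᗮ :=
      Submodule.orthogonal_le (le_trans le_sup_right hVWU) hxU
    have hA' : (inner ℂ (A x) x : ℂ).re ≤ supF A V :=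
      le_ciSup (supF_bddAbove A V) ⟨x, hxV, hx1⟩
    have hB' : (inner ℂ (B x) x : ℂ).re ≤ supF B W :=
      le_ciSup (supF_bddAbove B W) ⟨x, hxW, hx1⟩
    have : (inner ℂ ((A + B) x) x : ℂ).re
        = (inner ℂ (A x) x : ℂ).re + (inner ℂ (B x) x : ℂ).re := by
      simp [ContinuousLinearMap.add_apply, inner_add_left]
    rw [this]
    exact add_le_add hA' hB'
  have hVlt' : supF A V < lambdaPos A n + ε / 2 := hVlt
  have hWlt' : supF B W < lambdaPos B m + ε / 2 := hWlt
  linarith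

lemma re_inner_adjoint_comp (T : H →L[ℂ] H) (x : H) :
    (inner ℂ (((ContinuousLinearMap.adjoint T).comp T) x) x : ℂ).re = ‖T x‖ ^ 2 := by
  rw [ContinuousLinearMap.comp_apply, ContinuousLinearMap.adjoint_inner_left]
  have := @inner_self_eq_norm_sq ℂ _ _ _ _ (T x)
  simpa using this

lemma lambdaPos_adjoint_comp_nonneg (hH : ¬ FiniteDimensional ℂ H) (T : H →L[ℂ] H) (m : ℕ) :
    0 ≤ lambdaPos ((ContinuousLinearMap.adjoint T).comp T) m := by
  rw [lambdaPos_eq]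
  refine Real.le_iInf (fun V => ?_) le_rfl
  rcases isEmpty_or_nonempty {x : H // x ∈ (V : Submodule ℂ H)ᗮ ∧ ‖x‖ = 1} with h | h
  · rw [supF, Real.iSup_of_isEmpty]
  · obtain ⟨⟨x, hxV, hx1⟩⟩ := h
    refine le_trans ?_ (le_ciSup (supF_bddAbove _ _) ⟨x, hxV, hx1⟩)
    rw [re_inner_adjoint_comp]
    positivity

lemma sqrt_add_le' {a b : ℝ} (ha : 0 ≤ a) (hb : 0 ≤ b) :
    Real.sqrt (a + b) ≤ Real.sqrt a + Real.sqrt b := by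
  have h : a + b ≤ (Real.sqrt a + Real.sqrt b) ^ 2 := by
    nlinarith [Real.sq_sqrt ha, Real.sq_sqrt hb, Real.sqrt_nonneg a, Real.sqrt_nonneg b]
  calc Real.sqrt (a + b) ≤ Real.sqrt ((Real.sqrt a + Real.sqrt b) ^ 2) := Real.sqrt_le_sqrt h
    _ = Real.sqrt a + Real.sqrt b := Real.sqrt_sq (by positivity)

lemma lambdaPos_le_sVal (hH : ¬ FiniteDimensional ℂ H) (T : H →L[ℂ] H) (m : ℕ) :
    lambdaPos T m ≤ sVal T m := by
  haveI h1 := lambdaPos_index_nonempty hH m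
  refine le_of_forall_pos_le_add fun ε hε => ?_
  set S := (ContinuousLinearMap.adjoint T).comp T with hS
  have h0 : 0 ≤ lambdaPos S m := lambdaPos_adjoint_comp_nonneg hH T m
  have hlt : lambdaPos S m < lambdaPos S m + ε ^ 2 := by nlinarith
  rw [lambdaPos_eq] at hlt
  obtain ⟨⟨V, hV⟩, hVlt⟩ := exists_lt_of_ciInf_lt hlt
  have hVlt' : supF S V < lambdaPos S m + ε ^ 2 := hVlt
  have h3 : lambdaPos T m ≤ supF T V := lambdaPos_le_supF _ hV
  have h4 : supF T V ≤ Real.sqrt (lambdaPos S m + ε ^ 2) := by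
    refine Real.iSup_le ?_ (Real.sqrt_nonneg _)
    rintro ⟨x, hxV, hx1⟩
    have hx2 : (inner ℂ (S x) x : ℂ).re ≤ supF S V :=
      le_ciSup (supF_bddAbove S V) ⟨x, hxV, hx1⟩
    rw [hS, re_inner_adjoint_comp] at hx2
    have hTx : ‖T x‖ ≤ Real.sqrt (lambdaPos S m + ε ^ 2) := by
      rw [show ‖T x‖ = Real.sqrt (‖T x‖ ^ 2) from (Real.sqrt_sq (norm_nonneg _)).symm]
      exact Real.sqrt_le_sqrt (by linarith)
    calc (inner ℂ (T x) x : ℂ).re ≤ ‖(inner ℂ (T x) x : ℂ)‖ := Complex.re_le_norm _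
      _ = ‖(inner ℂ (T x) x : ℂ)‖ := rfl
      _ ≤ ‖T x‖ * ‖x‖ := norm_inner_le_norm _ _
      _ = ‖T x‖ := by rw [hx1, mul_one]
      _ ≤ _ := hTx
  have h5 : Real.sqrt (lambdaPos S m + ε ^ 2) ≤ sVal T m + ε := by
    have := sqrt_add_le' h0 (sq_nonneg ε)
    rw [Real.sqrt_sq hε.le] at this
    exact this
  linarith

lemma sVal_neg (B : H →L[ℂ] H) (n : ℕ) : sVal (-B) n = sVal B n := by
  unfold sVal
  rw [map_neg, ContinuousLinearMap.neg_comp, ContinuousLinearMap.comp_neg, neg_neg]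

lemma sVal_nonneg (B : H →L[ℂ] H) (n : ℕ) : 0 ≤ sVal B n := Real.sqrt_nonneg _

open Filter

lemma rpow_neg_anti {α : ℝ} (hα : 0 < α) {x y : ℝ} (hx : 0 < x) (hxy : x ≤ y) :
    y ^ (-α) ≤ x ^ (-α) := by
  have hy : 0 < y := lt_of_lt_of_le hx hxy
  rw [Real.rpow_neg hx.le, Real.rpow_neg hy.le]
  exact inv_anti₀ (Real.rpow_pos_of_pos hx α) (Real.rpow_le_rpow hx.le hxy hα.le)

lemma key_asymp (hH : ¬ FiniteDimensional ℂ H) {α : ℝ} (hα : 0 < α) (A B : H →L[ℂ] H) (C : ℝ)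
    (hp : ∀ ε > 0, ∀ᶠ n : ℕ in atTop,
      |lambdaPos A n - C * (n : ℝ) ^ (-α)| ≤ ε * (n : ℝ) ^ (-α))
    (hs : ∀ ε > 0, ∀ᶠ n : ℕ in atTop, sVal B n ≤ ε * (n : ℝ) ^ (-α)) :
    ∀ ε > 0, ∀ᶠ n : ℕ in atTop,
      |lambdaPos (A + B) n - C * (n : ℝ) ^ (-α)| ≤ ε * (n : ℝ) ^ (-α) := by
  intro ε hε
  -- continuity: choose δ
  set φ : ℝ → ℝ := fun d => |C| * ((1 - 2*d) ^ (-α) - 1) + |C| * (1 - (1 + 2*d) ^ (-α)) with hφdef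
  have hg : ContinuousAt (fun d : ℝ => 1 - 2*d) 0 := by fun_prop
  have hg' : ContinuousAt (fun d : ℝ => 1 + 2*d) 0 := by fun_prop
  have h1 : ContinuousAt (fun d : ℝ => (1 - 2*d) ^ (-α)) 0 :=
    hg.rpow_const (Or.inl (by norm_num))
  have h2 : ContinuousAt (fun d : ℝ => (1 + 2*d) ^ (-α)) 0 :=
    hg'.rpow_const (Or.inl (by norm_num))
  have hφcont : ContinuousAt φ 0 :=
    (continuousAt_const.mul (h1.sub continuousAt_const)).add
      (continuousAt_const.mul (continuousAt_const.sub h2))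
  have hφ0 : φ 0 = 0 := by
    simp only [hφdef, mul_zero, sub_zero, add_zero, Real.one_rpow]
    ring
  have hcont : Tendsto φ (nhds 0) (nhds 0) := by
    have h := hφcont.tendsto
    rwa [hφ0] at h
  have hev : ∀ᶠ d in nhds (0:ℝ), φ d < ε/3 :=
    hcont.eventually (gt_mem_nhds (show 0 < ε/3 by positivity))
  obtain ⟨r, hr0, hrball⟩ := Metric.eventually_nhds_iff.mp hev
  set δ : ℝ := min (r/2) (1/4) with hδdef
  have hδ0 : 0 < δ := lt_min (by positivity) (by norm_num)
  have hδ4 : δ ≤ 1/4 := min_le_right _ _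
  have hφδ : φ δ < ε/3 := by
    apply hrball
    rw [Real.dist_eq, sub_zero, abs_of_pos hδ0]
    calc δ ≤ r/2 := min_le_left _ _
      _ < r := by linarith only [hr0]
  have h2α : (0:ℝ) < 2 ^ α := Real.rpow_pos_of_pos two_pos α
  have h2α1 : (1:ℝ) ≤ 2 ^ α := Real.one_le_rpow one_le_two hα.le
  set ε₁ : ℝ := ε/3 / 2 ^ α with hε₁def
  have hε₁ : 0 < ε₁ := by positivity
  set ε₂ : ℝ := ε/3 * δ ^ α with hε₂def
  have hε₂ : 0 < ε₂ := by positivity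
  obtain ⟨N₁, hN₁⟩ := eventually_atTop.mp (hp ε₁ hε₁)
  obtain ⟨N₂, hN₂⟩ := eventually_atTop.mp (hs ε₂ hε₂)
  refine eventually_atTop.mpr
    ⟨max (max (⌈1/δ⌉₊ + 1) (⌈(N₂:ℝ)/δ⌉₊ + 1)) (max (2*N₁ + 4) 4), fun n hn => ?_⟩
  have hnA : ⌈1/δ⌉₊ + 1 ≤ n := le_trans (le_trans (le_max_left _ _) (le_max_left _ _)) hn
  have hnB : ⌈(N₂:ℝ)/δ⌉₊ + 1 ≤ n := le_trans (le_trans (le_max_right _ _) (le_max_left _ _)) hn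
  have hnC : 2*N₁ + 4 ≤ n := le_trans (le_trans (le_max_left _ _) (le_max_right _ _)) hn
  have hn4 : 4 ≤ n := le_trans (le_trans (le_max_right _ _) (le_max_right _ _)) hn
  have hn0 : (0:ℝ) < n := by
    have : 0 < n := by omega
    exact_mod_cast this
  have hδn1 : 1 ≤ δ * n := by
    have h1 : (1/δ : ℝ) ≤ (⌈1/δ⌉₊ : ℝ) := Nat.le_ceil _
    have h2 : ((⌈1/δ⌉₊ : ℕ) : ℝ) + 1 ≤ (n:ℝ) := by exact_mod_cast hnA
    have h3 : (1/δ : ℝ) ≤ n := by linarith only [h1, h2]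
    calc (1:ℝ) = δ * (1/δ) := by field_simp
      _ ≤ δ * n := by
          exact mul_le_mul_of_nonneg_left h3 hδ0.le
  set m : ℕ := ⌈δ * (n:ℝ)⌉₊ with hmdef
  have hm_lb : δ * n ≤ (m:ℝ) := Nat.le_ceil _
  have hm_pos : 0 < m := Nat.ceil_pos.mpr (by positivity)
  have hm_ub : (m:ℝ) ≤ 2*δ*n := by
    have := Nat.ceil_lt_add_one (show (0:ℝ) ≤ δ * n by positivity)
    have h2 : (m:ℝ) < δ*n + 1 := this
    linarith only [h2, hδn1]
  have hmn2 : (m:ℝ) ≤ (n:ℝ)/2 := by nlinarith only [hm_ub, hδ4, hn0]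
  have hm_le_n : m ≤ n := by
    have : (m:ℝ) ≤ (n:ℝ) := by linarith only [hmn2, hn0]
    exact_mod_cast this
  have hnm_cast : ((n - m : ℕ) : ℝ) = (n:ℝ) - m := by
    rw [Nat.cast_sub hm_le_n]
  have hnm_pos : (0:ℝ) < (n:ℝ) - m := by linarith only [hmn2, hn0]
  have h12δ : (0:ℝ) < 1 - 2*δ := by linarith only [hδ4]
  have hnm_lb : (1 - 2*δ) * n ≤ (n:ℝ) - m := by nlinarith only [hm_ub]
  -- index bounds
  have hidx1 : N₁ ≤ n - m := by
    have hc : (N₁:ℝ) ≤ ((n - m : ℕ) : ℝ) := by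
      rw [hnm_cast]
      have : (2*N₁ + 4 : ℝ) ≤ n := by exact_mod_cast hnC
      push_cast at this ⊢
      linarith only [this, hmn2]
    exact_mod_cast hc
  have hidx2 : N₁ ≤ n + m := by omega
  have hidx3 : N₂ ≤ m := by
    have hc : (N₂:ℝ) ≤ (m:ℝ) := by
      have h1 : ((N₂:ℝ)/δ : ℝ) ≤ (⌈(N₂:ℝ)/δ⌉₊ : ℝ) := Nat.le_ceil _
      have h2 : ((⌈(N₂:ℝ)/δ⌉₊ : ℕ) : ℝ) + 1 ≤ (n:ℝ) := by exact_mod_cast hnB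
      have h3 : (N₂:ℝ)/δ ≤ n := by linarith
      have h4 : (N₂:ℝ) ≤ δ * n := by
        rw [div_le_iff₀ hδ0] at h3
        linarith only [h3]
      linarith only [h4, hm_lb]
    exact_mod_cast hc
  have honm : 1 ≤ n - m := by
    have : (0:ℝ) < ((n - m : ℕ) : ℝ) := by rw [hnm_cast]; linarith only [hnm_pos]
    have : 0 < n - m := by exact_mod_cast this
    omega
  -- hypothesis instances
  have hA1 := hN₁ (n - m) hidx1
  have hA2 := hN₁ (n + m) hidx2
  have hB1 := hN₂ m hidx3
  -- operator inequalities
  have hup : lambdaPos (A+B) n ≤ lambdaPos A (n - m) + sVal B m := by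
    have h := lambdaPos_subadd hH A B honm hm_pos
    rw [Nat.sub_add_cancel hm_le_n] at h
    have h2 := lambdaPos_le_sVal hH B m
    linarith only [h, h2]
  have hlow : lambdaPos A (n + m) - sVal B m ≤ lambdaPos (A+B) n := by
    have h := lambdaPos_subadd hH (A+B) (-B) (n := n) (m := m) (by omega) hm_pos
    rw [show A + B + -B = A by abel] at h
    have h2 := lambdaPos_le_sVal hH (-B) m
    rw [sVal_neg] at h2
    linarith only [h, h2]
  -- rpow estimates
  have hr_n_pos : (0:ℝ) < (n:ℝ) ^ (-α) := Real.rpow_pos_of_pos hn0 _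
  have hr_nm_ub : ((n - m : ℕ):ℝ) ^ (-α) ≤ (1 - 2*δ) ^ (-α) * (n:ℝ) ^ (-α) := by
    rw [hnm_cast, ← Real.mul_rpow h12δ.le hn0.le]
    exact rpow_neg_anti hα (by positivity) hnm_lb
  have hr_nm_lb : (n:ℝ) ^ (-α) ≤ ((n - m : ℕ):ℝ) ^ (-α) := by
    rw [hnm_cast]
    exact rpow_neg_anti hα hnm_pos (by linarith only [hm_lb, hδn1])
  have hhalf : (1/2 : ℝ) ≤ 1 - 2*δ := by linarith
  have hr_2α : (1 - 2*δ) ^ (-α) ≤ 2 ^ α := by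
    have h := rpow_neg_anti hα (show (0:ℝ) < 1/2 by norm_num) hhalf
    have heq : ((1:ℝ)/2) ^ (-α) = 2 ^ α := by
      rw [one_div, Real.inv_rpow (by norm_num : (0:ℝ) ≤ 2), Real.rpow_neg (by norm_num : (0:ℝ) ≤ 2),
        inv_inv]
    linarith only [heq ▸ h]
  have hr_np_lb : (1 + 2*δ) ^ (-α) * (n:ℝ) ^ (-α) ≤ ((n + m : ℕ):ℝ) ^ (-α) := by
    rw [← Real.mul_rpow (by positivity) hn0.le]
    apply rpow_neg_anti hα (by positivity)
    push_cast
    linarith only [hm_ub]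
  have hr_np_ub : ((n + m : ℕ):ℝ) ^ (-α) ≤ (n:ℝ) ^ (-α) := by
    apply rpow_neg_anti hα hn0
    push_cast
    linarith [Nat.cast_nonneg (α := ℝ) m]
  have hr_m : (m:ℝ) ^ (-α) ≤ δ ^ (-α) * (n:ℝ) ^ (-α) := by
    rw [← Real.mul_rpow hδ0.le hn0.le]
    exact rpow_neg_anti hα (by positivity) hm_lb
  -- one ≥ / ≤ facts
  have hg1ge : (1:ℝ) ≤ (1 - 2*δ) ^ (-α) := by
    have := rpow_neg_anti hα h12δ (show 1 - 2*δ ≤ 1 by linarith only [hδ0])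
    rwa [Real.one_rpow] at this
  have hg2le : (1 + 2*δ) ^ (-α) ≤ 1 := by
    have := rpow_neg_anti hα one_pos (show (1:ℝ) ≤ 1 + 2*δ by linarith only [hδ0])
    rwa [Real.one_rpow] at this
  have hφ1 : 0 ≤ |C| * ((1 - 2*δ) ^ (-α) - 1) :=
    mul_nonneg (abs_nonneg C) (by linarith only [hg1ge])
  have hφ2 : 0 ≤ |C| * (1 - (1 + 2*δ) ^ (-α)) :=
    mul_nonneg (abs_nonneg C) (by linarith only [hg2le])
  have hφδ' : |C| * ((1 - 2*δ) ^ (-α) - 1) + |C| * (1 - (1 + 2*δ) ^ (-α)) < ε/3 := hφδ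
  have e1 : |C| * ((1 - 2*δ) ^ (-α) - 1) ≤ ε/3 := by linarith only [hφδ', hφ2]
  have e2 : |C| * (1 - (1 + 2*δ) ^ (-α)) ≤ ε/3 := by linarith only [hφδ', hφ1]
  -- epsilon-term estimates
  have hr1 : ε₁ * ((n - m : ℕ):ℝ) ^ (-α) ≤ ε/3 * (n:ℝ) ^ (-α) := by
    have h1 : ε₁ * ((n - m : ℕ):ℝ) ^ (-α) ≤ ε₁ * ((1 - 2*δ) ^ (-α) * (n:ℝ) ^ (-α)) :=
      mul_le_mul_of_nonneg_left hr_nm_ub hε₁.le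
    have h2 : ε₁ * ((1 - 2*δ) ^ (-α) * (n:ℝ) ^ (-α)) ≤ ε₁ * (2 ^ α * (n:ℝ) ^ (-α)) := by
      apply mul_le_mul_of_nonneg_left _ hε₁.le
      exact mul_le_mul_of_nonneg_right hr_2α hr_n_pos.le
    have h3 : ε₁ * (2 ^ α * (n:ℝ) ^ (-α)) = ε/3 * (n:ℝ) ^ (-α) := by
      rw [hε₁def]
      field_simp
    linarith only [h1, h2, h3]
  have hε₁le : ε₁ ≤ ε/3 := by
    rw [hε₁def, div_le_iff₀ h2α]
    nlinarith only [h2α1, hε]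
  have hr1' : ε₁ * ((n + m : ℕ):ℝ) ^ (-α) ≤ ε/3 * (n:ℝ) ^ (-α) := by
    have h1 : ε₁ * ((n + m : ℕ):ℝ) ^ (-α) ≤ ε₁ * (n:ℝ) ^ (-α) :=
      mul_le_mul_of_nonneg_left hr_np_ub hε₁.le
    have h2 : ε₁ * (n:ℝ) ^ (-α) ≤ ε/3 * (n:ℝ) ^ (-α) :=
      mul_le_mul_of_nonneg_right hε₁le hr_n_pos.le
    linarith only [h1, h2]
  have hr2 : ε₂ * (m:ℝ) ^ (-α) ≤ ε/3 * (n:ℝ) ^ (-α) := by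
    have h1 : ε₂ * (m:ℝ) ^ (-α) ≤ ε₂ * (δ ^ (-α) * (n:ℝ) ^ (-α)) :=
      mul_le_mul_of_nonneg_left hr_m hε₂.le
    have h2 : ε₂ * (δ ^ (-α) * (n:ℝ) ^ (-α)) = ε/3 * (n:ℝ) ^ (-α) := by
      rw [hε₂def]
      have : δ ^ α * δ ^ (-α) = 1 := by
        rw [← Real.rpow_add hδ0]
        simp
      calc ε/3 * δ ^ α * (δ ^ (-α) * (n:ℝ) ^ (-α)) = ε/3 * (δ ^ α * δ ^ (-α)) * (n:ℝ) ^ (-α) := by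
            ring
        _ = ε/3 * (n:ℝ) ^ (-α) := by rw [this]; ring
    linarith only [h1, h2]
  -- C-term estimates
  have habsC := le_abs_self C
  have habsC' := neg_abs_le C
  have hC1 : C * ((n - m : ℕ):ℝ) ^ (-α) - C * (n:ℝ) ^ (-α) ≤ ε/3 * (n:ℝ) ^ (-α) := by
    have hd : (0:ℝ) ≤ ((n - m : ℕ):ℝ) ^ (-α) - (n:ℝ) ^ (-α) := by
      linarith only [hr_nm_lb]
    have step1 : C * (((n - m : ℕ):ℝ) ^ (-α) - (n:ℝ) ^ (-α))
        ≤ |C| * (((n - m : ℕ):ℝ) ^ (-α) - (n:ℝ) ^ (-α)) :=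
      mul_le_mul_of_nonneg_right habsC hd
    have hd2 : ((n - m : ℕ):ℝ) ^ (-α) - (n:ℝ) ^ (-α) ≤ ((1 - 2*δ) ^ (-α) - 1) * (n:ℝ) ^ (-α) := by
      have hx : ((1 - 2*δ) ^ (-α) - 1) * (n:ℝ) ^ (-α)
          = (1 - 2*δ) ^ (-α) * (n:ℝ) ^ (-α) - (n:ℝ) ^ (-α) := by ring
      linarith only [hr_nm_ub, hx]
    have step2 : |C| * (((n - m : ℕ):ℝ) ^ (-α) - (n:ℝ) ^ (-α))
        ≤ |C| * (((1 - 2*δ) ^ (-α) - 1) * (n:ℝ) ^ (-α)) :=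
      mul_le_mul_of_nonneg_left hd2 (abs_nonneg C)
    have step3 : |C| * (((1 - 2*δ) ^ (-α) - 1) * (n:ℝ) ^ (-α)) ≤ ε/3 * (n:ℝ) ^ (-α) := by
      rw [← mul_assoc]
      exact mul_le_mul_of_nonneg_right e1 hr_n_pos.le
    have hx2 : C * (((n - m : ℕ):ℝ) ^ (-α) - (n:ℝ) ^ (-α))
        = C * ((n - m : ℕ):ℝ) ^ (-α) - C * (n:ℝ) ^ (-α) := by ring
    linarith only [step1, step2, step3, hx2]
  have hC2 : C * (n:ℝ) ^ (-α) - C * ((n + m : ℕ):ℝ) ^ (-α) ≤ ε/3 * (n:ℝ) ^ (-α) := by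
    have hd : (0:ℝ) ≤ (n:ℝ) ^ (-α) - ((n + m : ℕ):ℝ) ^ (-α) := by
      linarith only [hr_np_ub]
    have step1 : C * ((n:ℝ) ^ (-α) - ((n + m : ℕ):ℝ) ^ (-α))
        ≤ |C| * ((n:ℝ) ^ (-α) - ((n + m : ℕ):ℝ) ^ (-α)) :=
      mul_le_mul_of_nonneg_right habsC hd
    have hd2 : (n:ℝ) ^ (-α) - ((n + m : ℕ):ℝ) ^ (-α) ≤ (1 - (1 + 2*δ) ^ (-α)) * (n:ℝ) ^ (-α) := by
      have hx : (1 - (1 + 2*δ) ^ (-α)) * (n:ℝ) ^ (-α)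
          = (n:ℝ) ^ (-α) - (1 + 2*δ) ^ (-α) * (n:ℝ) ^ (-α) := by ring
      linarith only [hr_np_lb, hx]
    have step2 : |C| * ((n:ℝ) ^ (-α) - ((n + m : ℕ):ℝ) ^ (-α))
        ≤ |C| * ((1 - (1 + 2*δ) ^ (-α)) * (n:ℝ) ^ (-α)) :=
      mul_le_mul_of_nonneg_left hd2 (abs_nonneg C)
    have step3 : |C| * ((1 - (1 + 2*δ) ^ (-α)) * (n:ℝ) ^ (-α)) ≤ ε/3 * (n:ℝ) ^ (-α) := by
      rw [← mul_assoc]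
      exact mul_le_mul_of_nonneg_right e2 hr_n_pos.le
    have hx2 : C * ((n:ℝ) ^ (-α) - ((n + m : ℕ):ℝ) ^ (-α))
        = C * (n:ℝ) ^ (-α) - C * ((n + m : ℕ):ℝ) ^ (-α) := by ring
    linarith only [step1, step2, step3, hx2]
  -- conclude
  obtain ⟨hA1l, hA1u⟩ := abs_le.mp hA1
  obtain ⟨hA2l, hA2u⟩ := abs_le.mp hA2
  rw [abs_le]
  constructor
  · -- lower bound
    linarith only [hlow, hA2l, hC2, hr1', hB1, hr2]
  · -- upper bound
    linarith only [hup, hA1u, hC1, hr1, hB1, hr2]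

lemma lambdaPos_eq_zero (hfin : FiniteDimensional ℂ H) (T : H →L[ℂ] H) {n : ℕ}
    (h : finrank ℂ H ≤ n) : lambdaPos T n = 0 := by
  rw [lambdaPos_eq]
  rcases isEmpty_or_nonempty {V : Submodule ℂ H // finrank ℂ V = n} with hE | hN
  · exact Real.iInf_of_isEmpty _
  · have hall : ∀ V : {V : Submodule ℂ H // finrank ℂ V = n},
        supF T (V : Submodule ℂ H) = 0 := by
      rintro ⟨V, hV⟩
      have hVle : finrank ℂ V ≤ finrank ℂ H := V.finrank_le
      have heq : finrank ℂ V = finrank ℂ H := le_antisymm hVle (le_trans h hV.ge)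
      have hVtop : V = ⊤ := Submodule.eq_top_of_finrank_eq heq
      subst hVtop
      have hEmp : IsEmpty {x : H // x ∈ (⊤ : Submodule ℂ H)ᗮ ∧ ‖x‖ = 1} := by
        constructor
        rintro ⟨x, hx, hx1⟩
        rw [Submodule.top_orthogonal_eq_bot, Submodule.mem_bot] at hx
        subst hx
        simp at hx1
      exact Real.iSup_of_isEmpty _
    calc (⨅ V : {V : Submodule ℂ H // finrank ℂ V = n}, supF T (V : Submodule ℂ H))
        = ⨅ _ : {V : Submodule ℂ H // finrank ℂ V = n}, (0:ℝ) := iInf_congr hall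
      _ = 0 := ciInf_const

open Asymptotics

lemma littleO_iff_abs {f : ℕ → ℝ} {α : ℝ} :
    (f =o[atTop] fun n : ℕ => (n : ℝ) ^ (-α)) ↔
      ∀ ε > 0, ∀ᶠ n : ℕ in atTop, |f n| ≤ ε * (n : ℝ) ^ (-α) := by
  have hnorm : ∀ n : ℕ, ‖(n:ℝ) ^ (-α)‖ = (n:ℝ) ^ (-α) := fun n => by
    rw [Real.norm_eq_abs, abs_of_nonneg (Real.rpow_nonneg (Nat.cast_nonneg n) _)]
  constructor
  · intro h ε hε
    filter_upwards [isLittleO_iff.mp h hε] with n hn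
    rwa [Real.norm_eq_abs, hnorm] at hn
  · intro h
    rw [isLittleO_iff]
    intro c hc
    filter_upwards [h c hc] with n hn
    rwa [Real.norm_eq_abs, hnorm]


open Asymptotics Filter

theorem eigenvalue_asymptotics_stability (α : ℝ) (hα : 0 < α)
    (A B : H →L[ℂ] H)
    (hAc : IsCompactOperator A) (hBc : IsCompactOperator B)
    (hAsa : IsSelfAdjoint A) (hBsa : IsSelfAdjoint B)
    (Cp Cm : ℝ)
    (hp : (fun n : ℕ => lambdaPos A n - Cp * (n : ℝ) ^ (-α)) =o[atTop]
      fun n : ℕ => (n : ℝ) ^ (-α))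
    (hm : (fun n : ℕ => lambdaPos (-A) n - Cm * (n : ℝ) ^ (-α)) =o[atTop]
      fun n : ℕ => (n : ℝ) ^ (-α))
    (hs : (fun n : ℕ => sVal B n) =o[atTop] fun n : ℕ => (n : ℝ) ^ (-α)) :
    ((fun n : ℕ => lambdaPos (A + B) n - Cp * (n : ℝ) ^ (-α)) =o[atTop]
        fun n : ℕ => (n : ℝ) ^ (-α)) ∧
      ((fun n : ℕ => lambdaPos (-(A + B)) n - Cm * (n : ℝ) ^ (-α)) =o[atTop]
        fun n : ℕ => (n : ℝ) ^ (-α)) := by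
  by_cases hfin : FiniteDimensional ℂ H
  · constructor
    · refine hp.congr' ?_ EventuallyEq.rfl
      filter_upwards [eventually_ge_atTop (finrank ℂ H)] with n hn
      rw [lambdaPos_eq_zero hfin A hn, lambdaPos_eq_zero hfin (A + B) hn]
    · refine hm.congr' ?_ EventuallyEq.rfl
      filter_upwards [eventually_ge_atTop (finrank ℂ H)] with n hn
      rw [lambdaPos_eq_zero hfin (-A) hn, lambdaPos_eq_zero hfin (-(A + B)) hn]
  · have hs' : ∀ ε > 0, ∀ᶠ n : ℕ in atTop, sVal B n ≤ ε * (n : ℝ) ^ (-α) := by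
      intro ε hε
      filter_upwards [littleO_iff_abs.mp hs ε hε] with n hn
      exact (le_abs_self _).trans hn
    constructor
    · rw [littleO_iff_abs]
      exact key_asymp hfin hα A B Cp (littleO_iff_abs.mp hp) hs'
    · rw [littleO_iff_abs]
      have hsneg : ∀ ε > 0, ∀ᶠ n : ℕ in atTop, sVal (-B) n ≤ ε * (n : ℝ) ^ (-α) := by
        intro ε hε
        filter_upwards [hs' ε hε] with n hn
        rwa [sVal_neg]
      have h := key_asymp hfin hα (-A) (-B) Cm (littleO_iff_abs.mp hm) hsneg
      intro ε hε
      filter_upwards [h ε hε] with n hn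
      rwa [show -(A + B) = -A + -B by abel]
end
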